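/- Let v₁, v₂ ∈ ℝ² with |v₁| = l₁ ≤ l₂ = |v₂| and t₁, t₂ ∈ [0,1). Setting w = t₁v₁ + t₂v₂ and u = (t₁−1)v₁ + (t₂−1)v₂, one has min{|w|, |u|} ≤ l₂. -/
import Mathlib

theorem min_norm_w_u_le
    (v₁ v₂ : EuclideanSpace ℝ (Fin 2))
    (l₁ l₂ : ℝ)
    (hv₁ : ‖v₁‖ = l₁) (hv₂ : ‖v₂‖ = l₂) (hl : l₁ ≤ l₂)
    (t₁ t₂ : ℝ) (ht₁ : t₁ ∈ Set.Ico (0:ℝ) 1) (ht₂ : t₂ ∈ Set.Ico (0:ℝ) 1) :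
    min ‖t₁ • v₁ + t₂ • v₂‖ ‖(t₁ - 1) • v₁ + (t₂ - 1) • v₂‖ ≤ l₂ := by
  obtain ⟨h10, h11⟩ := ht₁
  obtain ⟨h20, h21⟩ := ht₂
  have hA : ‖t₁ • v₁ + t₂ • v₂‖ ≤ t₁ * l₁ + t₂ * l₂ := by
    calc ‖t₁ • v₁ + t₂ • v₂‖ ≤ ‖t₁ • v₁‖ + ‖t₂ • v₂‖ := norm_add_le _ _
    _ = t₁ * l₁ + t₂ * l₂ := by
        rw [norm_smul, norm_smul, hv₁, hv₂, Real.norm_eq_abs, Real.norm_eq_abs,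
          abs_of_nonneg h10, abs_of_nonneg h20]
  have hB : ‖(t₁ - 1) • v₁ + (t₂ - 1) • v₂‖ ≤ (1 - t₁) * l₁ + (1 - t₂) * l₂ := by
    calc ‖(t₁ - 1) • v₁ + (t₂ - 1) • v₂‖ ≤ ‖(t₁ - 1) • v₁‖ + ‖(t₂ - 1) • v₂‖ := norm_add_le _ _
    _ = (1 - t₁) * l₁ + (1 - t₂) * l₂ := by
        rw [norm_smul, norm_smul, hv₁, hv₂, Real.norm_eq_abs, Real.norm_eq_abs,
          abs_of_nonpos (by linarith), abs_of_nonpos (by linarith)]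
        ring
  have hl1 : 0 ≤ l₁ := hv₁ ▸ norm_nonneg _
  rcases le_total ‖t₁ • v₁ + t₂ • v₂‖ ‖(t₁ - 1) • v₁ + (t₂ - 1) • v₂‖ with h | h
  · rw [min_eq_left h]; nlinarith
  · rw [min_eq_right h]; nlinarith
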